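/- Let P = (Z,<) be a causal set with a finite down-set A such that P ∖ A has infinitely many minimal elements. Then the space Ω^P with metric d(ω,ω') = ∑_i 2^{−i} 𝟙(ω_i ≠ ω'_i) is not sequentially compact: there is a sequence of elements of Ω^P that is pairwise at distance exactly 2^{−k} (where k = |A|) and hence has no convergent subsequence. -/
import Mathlib


open scoped Classical

/-- Membership in `Ω^P`: an injective sequence in which each entry is minimal among the
elements not yet listed (everything strictly below an entry appears earlier). -/
def MemOmegaP {Z : Type*} [PartialOrder Z] (ω : ℕ → Z) : Prop :=
  Function.Injective ω ∧ ∀ k : ℕ, ∀ y : Z, y < ω k → ∃ j < k, ω j = y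

/-- The metric `d(x, y) = ∑_{i≥1} 2^{-i} 𝟙(x_i ≠ y_i)` on sequences (0-indexed). -/
noncomputable def seqDist {Z : Type*} (ω ω' : ℕ → Z) : ℝ :=
  ∑' i : ℕ, (2 : ℝ)⁻¹ ^ (i + 1) * (if ω i = ω' i then 0 else 1)

lemma seqDist_summable {Z : Type*} (x y : ℕ → Z) :
    Summable (fun i : ℕ => (2 : ℝ)⁻¹ ^ (i + 1) * (if x i = y i then 0 else 1)) := by
  have hg : Summable (fun i : ℕ => (2 : ℝ)⁻¹ ^ i) :=
    summable_geometric_of_lt_one (by norm_num) (by norm_num)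
  refine Summable.of_nonneg_of_le (fun i => ?_) (fun i => ?_) hg
  · positivity
  · split
    · rw [mul_zero]
      positivity
    · rw [mul_one]
      exact pow_le_pow_of_le_one (by norm_num) (by norm_num) (Nat.le_succ i)

lemma seqDist_comm {Z : Type*} (x y : ℕ → Z) : seqDist x y = seqDist y x := by
  unfold seqDist
  refine tsum_congr fun i => ?_
  by_cases h : x i = y i
  · rw [if_pos h, if_pos h.symm]
  · rw [if_neg h, if_neg (fun e => h e.symm)]

lemma seqDist_triangle {Z : Type*} (x y z : ℕ → Z) :
    seqDist x z ≤ seqDist x y + seqDist y z := by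
  unfold seqDist
  rw [← Summable.tsum_add (seqDist_summable x y) (seqDist_summable y z)]
  refine Summable.tsum_le_tsum (fun i => ?_) (seqDist_summable x z)
    ((seqDist_summable x y).add (seqDist_summable y z))
  have h1 : (0:ℝ) ≤ (2 : ℝ)⁻¹ ^ (i + 1) := by positivity
  by_cases hxz : x i = z i
  · by_cases hxy : x i = y i <;> by_cases hyz : y i = z i <;>
      simp [hxz, hxy, hyz] <;> positivity
  · by_cases hxy : x i = y i
    · have hyz : ¬ y i = z i := fun h => hxz (hxy.trans h)
      simp [hxz, hxy, hyz]
    · simp only [hxz, hxy, if_false, mul_one]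
      nlinarith [le_refl (0:ℝ), mul_nonneg h1 (show (0:ℝ) ≤ if y i = z i then 0 else 1 by split <;> norm_num)]

lemma seqDist_eq_pow {Z : Type*} (x y : ℕ → Z) (k : ℕ)
    (h1 : ∀ n < k, x n = y n) (h2 : ∀ n, k ≤ n → x n ≠ y n) :
    seqDist x y = (2 : ℝ)⁻¹ ^ k := by
  have hsum := seqDist_summable x y
  unfold seqDist
  rw [← Summable.sum_add_tsum_nat_add k hsum]
  have hz : ∑ i ∈ Finset.range k, (2 : ℝ)⁻¹ ^ (i + 1) * (if x i = y i then 0 else 1) = 0 := by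
    refine Finset.sum_eq_zero fun i hi => by
      simp [h1 i (Finset.mem_range.mp hi)]
  rw [hz, zero_add]
  have hc : ∀ i : ℕ, (2 : ℝ)⁻¹ ^ (i + k + 1) * (if x (i + k) = y (i + k) then 0 else 1)
      = (2 : ℝ)⁻¹ ^ (k + 1) * (2 : ℝ)⁻¹ ^ i := by
    intro i
    rw [if_neg (h2 (i + k) (Nat.le_add_left _ _)), mul_one]
    ring
  rw [tsum_congr hc, tsum_mul_left, tsum_geometric_of_lt_one (by norm_num) (by norm_num)]
  norm_num
  ring

/-- If `P` is a causal set having a finite down-set `A` of size `k` such that `P ∖ A` has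
infinitely many minimal elements, then `Ω^P` is not sequentially compact: there is a
sequence in `Ω^P` whose members are pairwise at distance exactly `2^{-k}`, and which has
no subsequence converging to an element of `Ω^P`. -/
theorem stmt16 (Z : Type*) [PartialOrder Z] [Countable Z] [Infinite Z]
    (hD : ∀ z : Z, {y : Z | y < z}.Finite)
    (A : Set Z) (hA : IsLowerSet A) (hAfin : A.Finite)
    (hinf : {b : Z | b ∉ A ∧ ∀ y ∉ A, ¬ y < b}.Infinite) :
    ∃ u : ℕ → {ω : ℕ → Z // MemOmegaP ω},
      (∀ i j : ℕ, i ≠ j →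
        seqDist ((u i) : ℕ → Z) ((u j) : ℕ → Z) = (2 : ℝ)⁻¹ ^ hAfin.toFinset.card) ∧
      ¬ ∃ ω : {ω : ℕ → Z // MemOmegaP ω}, ∃ φ : ℕ → ℕ, StrictMono φ ∧
        Filter.Tendsto (fun n => seqDist ((u (φ n)) : ℕ → Z) (ω : ℕ → Z))
          Filter.atTop (nhds 0) := by
  set k := hAfin.toFinset.card with hk
  have hinj : Function.Injective (toLinearExtension : Z →o LinearExtension Z) := by
    intro a b h
    exact h
  set emb : Z ↪ LinearExtension Z := ⟨toLinearExtension, hinj⟩ with hemb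
  set s : Finset (LinearExtension Z) := hAfin.toFinset.map emb with hs
  have hscard : s.card = k := by simp [hs, hk]
  set e := s.orderIsoOfFin hscard with he
  set a : Fin k → Z := fun i => ((e i : LinearExtension Z) : Z) with ha
  have haA : ∀ i, a i ∈ A := by
    intro i
    obtain ⟨z, hz, hze⟩ := Finset.mem_map.mp (show (e i : LinearExtension Z) ∈ Finset.map emb hAfin.toFinset from (e i).2)
    have h2 : z = a i := hze
    rw [← h2]
    exact hAfin.mem_toFinset.mp hz
  have hamono : ∀ i j : Fin k, a i < a j → i < j := by
    intro i j hij
    have h1 : toLinearExtension (a i) < toLinearExtension (a j) :=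
      (toLinearExtension.monotone.strictMono_of_injective hinj) hij
    have h2 : (e i : LinearExtension Z) < (e j : LinearExtension Z) := h1
    exact e.lt_iff_lt.mp (Subtype.coe_lt_coe.mp h2)
  have hasurj : ∀ z ∈ A, ∃ i : Fin k, a i = z := by
    intro z hz
    have hz' : emb z ∈ s := Finset.mem_map_of_mem emb (hAfin.mem_toFinset.mpr hz)
    obtain ⟨i, hi⟩ := e.surjective ⟨emb z, hz'⟩
    exact ⟨i, congrArg Subtype.val hi⟩
  have hainj : Function.Injective a := by
    intro i j hij
    have h1 : (e i : LinearExtension Z) = (e j : LinearExtension Z) := hij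
    exact e.injective (Subtype.ext h1)
  set M := {b : Z | b ∉ A ∧ ∀ y ∉ A, ¬ y < b} with hM
  set b : ℕ → Z := fun n => (hinf.natEmbedding _ n : Z) with hb
  have hbinj : Function.Injective b := fun m n h =>
    (hinf.natEmbedding _).injective (Subtype.ext h)
  have hbM : ∀ n, b n ∈ M := fun n => (hinf.natEmbedding _ n).2
  set ω : ℕ → ℕ → Z := fun i n => if h : n < k then a ⟨n, h⟩ else b (i + (n - k)) with hω
  have hωlt : ∀ i n (h : n < k), ω i n = a ⟨n, h⟩ := by
    intro i n h; simp [hω, h]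
  have hωge : ∀ i n, k ≤ n → ω i n = b (i + (n - k)) := by
    intro i n h; simp [hω, Nat.not_lt.mpr h]
  have hmem : ∀ i, MemOmegaP (ω i) := by
    intro i
    constructor
    · intro m n hmn
      by_cases hm : m < k <;> by_cases hn : n < k
      · rw [hωlt i m hm, hωlt i n hn] at hmn
        exact congrArg Fin.val (hainj hmn)
      · rw [hωlt i m hm, hωge i n (Nat.not_lt.mp hn)] at hmn
        exact absurd (hmn ▸ haA ⟨m, hm⟩) (hbM _).1
      · rw [hωge i m (Nat.not_lt.mp hm), hωlt i n hn] at hmn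
        exact absurd (hmn ▸ haA ⟨n, hn⟩) (hbM _).1
      · rw [hωge i m (Nat.not_lt.mp hm), hωge i n (Nat.not_lt.mp hn)] at hmn
        have h1 := Nat.add_left_cancel (hbinj hmn)
        omega
    · intro n y hy
      by_cases hn : n < k
      · rw [hωlt i n hn] at hy
        have hyA : y ∈ A := hA (le_of_lt hy) (haA ⟨n, hn⟩)
        obtain ⟨j, hj⟩ := hasurj y hyA
        have hjn : (j : ℕ) < n := hamono j ⟨n, hn⟩ (by rw [hj]; exact hy)
        refine ⟨j, hjn, ?_⟩
        rw [hωlt i j (lt_trans hjn hn)]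
        have hje : (⟨(j : ℕ), lt_trans hjn hn⟩ : Fin k) = j := Fin.ext rfl
        rw [hje]; exact hj
      · rw [hωge i n (Nat.not_lt.mp hn)] at hy
        have hyA : y ∈ A := by
          by_contra hyA
          exact (hbM (i + (n - k))).2 y hyA hy
        obtain ⟨j, hj⟩ := hasurj y hyA
        refine ⟨j, lt_of_lt_of_le j.2 (Nat.not_lt.mp hn), ?_⟩
        rw [hωlt i j j.2]
        have hje : (⟨(j : ℕ), j.2⟩ : Fin k) = j := Fin.ext rfl
        rw [hje]; exact hj
  set u : ℕ → {ω : ℕ → Z // MemOmegaP ω} := fun i => ⟨ω i, hmem i⟩ with hu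
  have hdist : ∀ i j : ℕ, i ≠ j → seqDist (ω i) (ω j) = (2 : ℝ)⁻¹ ^ k := by
    intro i j hij
    refine seqDist_eq_pow _ _ k (fun n hn => by rw [hωlt i n hn, hωlt j n hn]) ?_
    intro n hn
    rw [hωge i n hn, hωge j n hn]
    intro h
    have h1 := hbinj h
    omega
  refine ⟨u, fun i j hij => hdist i j hij, ?_⟩
  rintro ⟨ωlim, φ, hφ, htend⟩
  have hpos : (0:ℝ) < (2 : ℝ)⁻¹ ^ k / 2 := by positivity
  have hev : ∀ᶠ n in Filter.atTop,
      seqDist ((u (φ n)) : ℕ → Z) (ωlim : ℕ → Z) < (2 : ℝ)⁻¹ ^ k / 2 := by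
    have h1 := htend (Iio_mem_nhds hpos)
    simpa [Set.mem_Iio] using h1
  obtain ⟨N, hN⟩ := Filter.eventually_atTop.mp hev
  have h1 : seqDist (ω (φ N)) (ωlim : ℕ → Z) < (2 : ℝ)⁻¹ ^ k / 2 := hN N le_rfl
  have h2 : seqDist (ω (φ (N + 1))) (ωlim : ℕ → Z) < (2 : ℝ)⁻¹ ^ k / 2 :=
    hN (N + 1) (Nat.le_succ N)
  have hne : φ N ≠ φ (N + 1) := fun h => by
    have h3 := hφ.injective h; omega
  have heq : seqDist (ω (φ N)) (ω (φ (N + 1))) = (2:ℝ)⁻¹ ^ k := hdist _ _ hne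
  have htri := seqDist_triangle (ω (φ N)) (ωlim : ℕ → Z) (ω (φ (N + 1)))
  rw [seqDist_comm (ωlim : ℕ → Z) (ω (φ (N + 1)))] at htri
  linarith
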